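/- arXiv:math/0702226 — 6 statements merged into one kernel-verified Lean document; each statement's English description precedes it below -/
import Mathlib

section
/- Let A be an m×n complex matrix (m ≥ n) with full column rank, with rows a_1*, …, a_m*, and let x ∈ ℂⁿ solve Ax = b. Let (x_k) be the randomized Kaczmarz iteration: x_0 ∈ ℂⁿ is arbitrary, and given x_{k-1}, choose a random index r_k ∈ {1,…,m} (independently of previous choices) with P(r_k = j) = ‖a_j‖₂²/‖A‖_F², and set x_k = x_{k-1} + ((b_{r_k} − ⟨a_{r_k}, x_{k-1}⟩)/‖a_{r_k}‖₂²)·a_{r_k}. Then for every k ≥ 0, E‖x_k − x‖₂² ≤ (1 − κ(A)^{-2})^k · ‖x_0 − x‖₂², where κ(A) = ‖A‖_F / σ_min(A). -/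
/-!
Randomized Kaczmarz (Strohmer–Vershynin), Theorem 2 (main convergence estimate).

We model the matrix `A` by its rows `a 1, …, a m` (so `(Az)_j = ⟨a j, z⟩` and
`‖Az‖₂² = ∑ j ‖⟨a j, z⟩‖²`).  The expectation over the first `k` independent
random row choices (row `j` chosen with probability `‖a j‖²/‖A‖_F²`) is the
finite weighted sum over all index sequences `ω : Fin k → Fin m`.
-/

open scoped BigOperators

/-- One step of the Kaczmarz iteration: orthogonal projection of `y` onto the
hyperplane `{u : ⟨a j, u⟩ = b j}`. -/
noncomputable def kacStep {m n : ℕ} (a : Fin m → EuclideanSpace ℂ (Fin n))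
    (b : Fin m → ℂ) (j : Fin m) (y : EuclideanSpace ℂ (Fin n)) :
    EuclideanSpace ℂ (Fin n) :=
  y + ((b j - (inner ℂ (a j) y : ℂ)) / ((‖a j‖ : ℂ) ^ 2)) • a j

/-- The Kaczmarz iterate obtained from `x0` by applying the steps with the row
indices listed in `l` (in order). -/
noncomputable def kacIter {m n : ℕ} (a : Fin m → EuclideanSpace ℂ (Fin n))
    (b : Fin m → ℂ) (x0 : EuclideanSpace ℂ (Fin n)) (l : List (Fin m)) :
    EuclideanSpace ℂ (Fin n) :=
  l.foldl (fun y j => kacStep a b j y) x0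

/-- The squared Frobenius norm `‖A‖_F² = ∑ j ‖a j‖₂²`. -/
noncomputable def frobSq {m n : ℕ} (a : Fin m → EuclideanSpace ℂ (Fin n)) : ℝ :=
  ∑ j, ‖a j‖ ^ 2

/-- The smallest singular value `σ_min(A) = inf {‖Az‖₂ : ‖z‖₂ = 1}`, where
`‖Az‖₂² = ∑ j ‖⟨a j, z⟩‖²`. -/
noncomputable def sigmaMin {m n : ℕ} (a : Fin m → EuclideanSpace ℂ (Fin n)) : ℝ :=
  sInf {r : ℝ | ∃ z : EuclideanSpace ℂ (Fin n), ‖z‖ = 1 ∧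
    r = Real.sqrt (∑ j, ‖(inner ℂ (a j) z : ℂ)‖ ^ 2)}

/-- The scaled condition number `κ(A) = ‖A‖_F / σ_min(A)`. -/
noncomputable def scaledCond {m n : ℕ} (a : Fin m → EuclideanSpace ℂ (Fin n)) : ℝ :=
  Real.sqrt (frobSq a) / sigmaMin a

section AuxKaczmarz

variable {m n : ℕ} (a : Fin m → EuclideanSpace ℂ (Fin n))

lemma frobSq_nonneg : 0 ≤ frobSq a := Finset.sum_nonneg fun j _ => by positivity

lemma sigmaMin_nonneg : 0 ≤ sigmaMin a :=
  Real.sInf_nonneg (by rintro r ⟨z, hz, rfl⟩; exact Real.sqrt_nonneg _)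

lemma sigmaMin_sq_mul_le (z : EuclideanSpace ℂ (Fin n)) :
    sigmaMin a ^ 2 * ‖z‖ ^ 2 ≤ ∑ j, ‖(inner ℂ (a j) z : ℂ)‖ ^ 2 := by
  rcases eq_or_ne z 0 with rfl | hz
  · simp
  · have hzn : (0:ℝ) < ‖z‖ := norm_pos_iff.2 hz
    set u : EuclideanSpace ℂ (Fin n) := ((‖z‖⁻¹ : ℝ) : ℂ) • z with hu_def
    have hu : ‖u‖ = 1 := by
      rw [hu_def, norm_smul, Complex.norm_real, Real.norm_eq_abs,
        abs_of_pos (inv_pos.2 hzn), inv_mul_cancel₀ hzn.ne']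
    have hsum : ∑ j, ‖(inner ℂ (a j) u : ℂ)‖ ^ 2
        = ‖z‖⁻¹ ^ 2 * ∑ j, ‖(inner ℂ (a j) z : ℂ)‖ ^ 2 := by
      rw [Finset.mul_sum]
      refine Finset.sum_congr rfl fun j _ => ?_
      rw [hu_def, inner_smul_right, norm_mul, Complex.norm_real, Real.norm_eq_abs,
        abs_of_pos (inv_pos.2 hzn), mul_pow]
    have h1 : sigmaMin a ≤ Real.sqrt (∑ j, ‖(inner ℂ (a j) u : ℂ)‖ ^ 2) :=
      csInf_le ⟨0, by rintro r ⟨w, hw, rfl⟩; exact Real.sqrt_nonneg _⟩ ⟨u, hu, rfl⟩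
    have h2 : sigmaMin a ^ 2 ≤ ∑ j, ‖(inner ℂ (a j) u : ℂ)‖ ^ 2 := by
      have := pow_le_pow_left₀ (sigmaMin_nonneg a) h1 2
      rwa [Real.sq_sqrt (Finset.sum_nonneg fun j _ => by positivity)] at this
    rw [hsum] at h2
    have := mul_le_mul_of_nonneg_right h2 (le_of_lt (pow_pos hzn 2))
    calc sigmaMin a ^ 2 * ‖z‖ ^ 2 ≤ ‖z‖⁻¹ ^ 2 * (∑ j, ‖(inner ℂ (a j) z : ℂ)‖ ^ 2) * ‖z‖ ^ 2 := this
      _ = ∑ j, ‖(inner ℂ (a j) z : ℂ)‖ ^ 2 := by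
          field_simp

lemma sigmaMin_sq_le_frobSq : sigmaMin a ^ 2 ≤ frobSq a := by
  by_cases hS : {r : ℝ | ∃ z : EuclideanSpace ℂ (Fin n), ‖z‖ = 1 ∧
      r = Real.sqrt (∑ j, ‖(inner ℂ (a j) z : ℂ)‖ ^ 2)}.Nonempty
  · obtain ⟨r, z, hz, rfl⟩ := hS
    have h1 : sigmaMin a ≤ Real.sqrt (∑ j, ‖(inner ℂ (a j) z : ℂ)‖ ^ 2) :=
      csInf_le ⟨0, by rintro r ⟨w, hw, rfl⟩; exact Real.sqrt_nonneg _⟩ ⟨z, hz, rfl⟩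
    have h2 : ∑ j, ‖(inner ℂ (a j) z : ℂ)‖ ^ 2 ≤ frobSq a := by
      refine Finset.sum_le_sum fun j _ => ?_
      have := norm_inner_le_norm (𝕜 := ℂ) (a j) z
      calc ‖(inner ℂ (a j) z : ℂ)‖ ^ 2 ≤ (‖a j‖ * ‖z‖) ^ 2 :=
            pow_le_pow_left₀ (norm_nonneg _) this 2
        _ = ‖a j‖ ^ 2 := by rw [hz]; ring
    have := pow_le_pow_left₀ (sigmaMin_nonneg a) h1 2
    rw [Real.sq_sqrt (Finset.sum_nonneg fun j _ => by positivity)] at this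
    exact this.trans h2
  · rw [Set.not_nonempty_iff_eq_empty] at hS
    rw [sigmaMin, hS, Real.sInf_empty]
    simpa using frobSq_nonneg a

lemma inv_scaledCond_sq : ((scaledCond a)⁻¹) ^ 2 = sigmaMin a ^ 2 / frobSq a := by
  rw [scaledCond, inv_div, div_pow, Real.sq_sqrt (frobSq_nonneg a)]

lemma one_sub_nonneg' : 0 ≤ 1 - ((scaledCond a)⁻¹) ^ 2 := by
  rw [inv_scaledCond_sq]
  rcases eq_or_lt_of_le (frobSq_nonneg a) with hF | hF
  · simp [← hF]
  · have : sigmaMin a ^ 2 / frobSq a ≤ 1 := (div_le_one hF).2 (sigmaMin_sq_le_frobSq a)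
    linarith

lemma kacStep_err (b : Fin m → ℂ) (x : EuclideanSpace ℂ (Fin n))
    (hx : ∀ j, (inner ℂ (a j) x : ℂ) = b j) (j : Fin m) (y : EuclideanSpace ℂ (Fin n)) :
    ‖kacStep a b j y - x‖ ^ 2
      = ‖y - x‖ ^ 2 - ‖(inner ℂ (a j) (y - x) : ℂ)‖ ^ 2 / ‖a j‖ ^ 2 := by
  rcases eq_or_ne (a j) 0 with h0 | h0
  · have hb : b j = 0 := by rw [← hx j, h0, inner_zero_left]
    simp [kacStep, h0, hb]
  · have hna : (0:ℝ) < ‖a j‖ := norm_pos_iff.2 h0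
    set c : ℂ := (inner ℂ (a j) (y - x) : ℂ) / ((‖a j‖ : ℂ) ^ 2) with hc
    have hstep : kacStep a b j y - x = (y - x) - c • a j := by
      have : b j - (inner ℂ (a j) y : ℂ) = -(inner ℂ (a j) (y - x) : ℂ) := by
        rw [inner_sub_right, ← hx j]; ring
      rw [kacStep, hc, this]
      rw [neg_div, neg_smul]
      abel
    have hortho : (inner ℂ (a j) ((y - x) - c • a j) : ℂ) = 0 := by
      have hne : ((‖a j‖ : ℂ)) ^ 2 ≠ 0 :=
        pow_ne_zero 2 (Complex.ofReal_ne_zero.2 hna.ne')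
      rw [inner_sub_right, inner_smul_right, inner_self_eq_norm_sq_to_K, hc]
      exact sub_eq_zero.2 (div_mul_cancel₀ _ hne).symm
    have hortho' : (inner ℂ ((y - x) - c • a j) (c • a j) : ℂ) = 0 := by
      rw [inner_smul_right, ← inner_conj_symm, hortho]
      simp
    have hpyth : ‖((y - x) - c • a j) + c • a j‖ ^ 2
        = ‖(y - x) - c • a j‖ ^ 2 + ‖c • a j‖ ^ 2 := by
      have h := norm_add_sq_eq_norm_sq_add_norm_sq_of_inner_eq_zero _ _ hortho'
      simpa [← pow_two] using h
    have hsum : ((y - x) - c • a j) + c • a j = y - x := by abel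
    rw [hsum] at hpyth
    have hcnorm : ‖c • a j‖ ^ 2 = ‖(inner ℂ (a j) (y - x) : ℂ)‖ ^ 2 / ‖a j‖ ^ 2 := by
      rw [norm_smul, hc, norm_div, mul_pow, div_pow]
      have : ‖((‖a j‖ : ℂ)) ^ 2‖ = ‖a j‖ ^ 2 := by
        rw [norm_pow, Complex.norm_real, Real.norm_eq_abs, abs_of_pos hna]
      rw [this]
      field_simp
    rw [hstep, hpyth, hcnorm]
    ring

lemma kacStep_exp (b : Fin m → ℂ) (x : EuclideanSpace ℂ (Fin n))
    (hx : ∀ j, (inner ℂ (a j) x : ℂ) = b j) (y : EuclideanSpace ℂ (Fin n)) :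
    ∑ j, (‖a j‖ ^ 2 / frobSq a) * ‖kacStep a b j y - x‖ ^ 2
      ≤ (1 - ((scaledCond a)⁻¹) ^ 2) * ‖y - x‖ ^ 2 := by
  rcases eq_or_lt_of_le (frobSq_nonneg a) with hF | hF
  · have hz : ∀ j : Fin m, (‖a j‖ ^ 2 / frobSq a) * ‖kacStep a b j y - x‖ ^ 2 = 0 := by
      intro j; rw [← hF]; simp
    rw [Finset.sum_eq_zero fun j _ => hz j]
    exact mul_nonneg (one_sub_nonneg' a) (by positivity)
  · have hterm : ∀ j : Fin m,
        (‖a j‖ ^ 2 / frobSq a) * ‖kacStep a b j y - x‖ ^ 2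
          = (‖a j‖ ^ 2 / frobSq a) * ‖y - x‖ ^ 2
            - ‖(inner ℂ (a j) (y - x) : ℂ)‖ ^ 2 / frobSq a := by
      intro j
      rw [kacStep_err a b x hx j y, mul_sub]
      rcases eq_or_ne (a j) 0 with h0 | h0
      · simp [h0]
      · have hna : (0:ℝ) < ‖a j‖ := norm_pos_iff.2 h0
        congr 1
        field_simp
    rw [Finset.sum_congr rfl fun j _ => hterm j, Finset.sum_sub_distrib,
      ← Finset.sum_mul, ← Finset.sum_div, ← Finset.sum_div]
    have hw : (∑ j : Fin m, ‖a j‖ ^ 2) / frobSq a = 1 := by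
      rw [← frobSq, div_self hF.ne']
    rw [hw, one_mul, inv_scaledCond_sq, sub_mul, one_mul]
    have hlow : sigmaMin a ^ 2 * ‖y - x‖ ^ 2 ≤ ∑ j, ‖(inner ℂ (a j) (y - x) : ℂ)‖ ^ 2 :=
      sigmaMin_sq_mul_le a (y - x)
    have : sigmaMin a ^ 2 * ‖y - x‖ ^ 2 / frobSq a
        ≤ (∑ j, ‖(inner ℂ (a j) (y - x) : ℂ)‖ ^ 2) / frobSq a := by
      gcongr
    have heq : sigmaMin a ^ 2 / frobSq a * ‖y - x‖ ^ 2
        = sigmaMin a ^ 2 * ‖y - x‖ ^ 2 / frobSq a := by ring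
    linarith

end AuxKaczmarz

/-- **Randomized Kaczmarz converges in expectation with exponential rate**:
`E ‖x_k − x‖₂² ≤ (1 − κ(A)⁻²)^k ‖x₀ − x‖₂²`. -/
theorem randomized_kaczmarz_expected_error
    (m n : ℕ) (hmn : n ≤ m)
    (a : Fin m → EuclideanSpace ℂ (Fin n)) (b : Fin m → ℂ)
    (hrank : ∀ z : EuclideanSpace ℂ (Fin n), (∀ j, (inner ℂ (a j) z : ℂ) = 0) → z = 0)
    (x : EuclideanSpace ℂ (Fin n)) (hx : ∀ j, (inner ℂ (a j) x : ℂ) = b j)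
    (x0 : EuclideanSpace ℂ (Fin n)) (k : ℕ) :
    ∑ ω : Fin k → Fin m,
        (∏ i, ‖a (ω i)‖ ^ 2 / frobSq a) * ‖kacIter a b x0 (List.ofFn ω) - x‖ ^ 2
      ≤ (1 - ((scaledCond a)⁻¹) ^ 2) ^ k * ‖x0 - x‖ ^ 2 := by
  induction k generalizing x0 with
  | zero => simp [kacIter]
  | succ k ih =>
    have hsplit :
        ∑ ω : Fin (k + 1) → Fin m,
            (∏ i, ‖a (ω i)‖ ^ 2 / frobSq a) * ‖kacIter a b x0 (List.ofFn ω) - x‖ ^ 2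
          = ∑ j : Fin m, (‖a j‖ ^ 2 / frobSq a) *
              ∑ ω' : Fin k → Fin m, (∏ i, ‖a (ω' i)‖ ^ 2 / frobSq a) *
                ‖kacIter a b (kacStep a b j x0) (List.ofFn ω') - x‖ ^ 2 := by
      rw [← (Fin.consEquiv fun _ : Fin (k+1) => Fin m).sum_comp
        (fun ω => (∏ i, ‖a (ω i)‖ ^ 2 / frobSq a) * ‖kacIter a b x0 (List.ofFn ω) - x‖ ^ 2)]
      rw [Fintype.sum_prod_type]
      refine Finset.sum_congr rfl fun j _ => ?_
      rw [Finset.mul_sum]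
      refine Finset.sum_congr rfl fun ω' _ => ?_
      have h1 : (Fin.consEquiv fun _ : Fin (k+1) => Fin m) (j, ω') = Fin.cons j ω' := by
        ext i
        simp [Fin.consEquiv]
      rw [h1]
      have h2 : List.ofFn (Fin.cons j ω' : Fin (k+1) → Fin m) = j :: List.ofFn ω' := by
        rw [List.ofFn_succ]
        simp [Fin.cons_zero, Fin.cons_succ]
      have h3 : ∏ i, ‖a ((Fin.cons j ω' : Fin (k+1) → Fin m) i)‖ ^ 2 / frobSq a
          = (‖a j‖ ^ 2 / frobSq a) * ∏ i, ‖a (ω' i)‖ ^ 2 / frobSq a := by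
        rw [Fin.prod_univ_succ]
        simp [Fin.cons_zero, Fin.cons_succ]
      have h4 : kacIter a b x0 (j :: List.ofFn ω')
          = kacIter a b (kacStep a b j x0) (List.ofFn ω') := rfl
      rw [h2, h3, h4]
      ring
    rw [hsplit]
    have hstep1 : ∀ j : Fin m,
        (‖a j‖ ^ 2 / frobSq a) *
            (∑ ω' : Fin k → Fin m, (∏ i, ‖a (ω' i)‖ ^ 2 / frobSq a) *
              ‖kacIter a b (kacStep a b j x0) (List.ofFn ω') - x‖ ^ 2)
          ≤ (‖a j‖ ^ 2 / frobSq a) *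
            ((1 - ((scaledCond a)⁻¹) ^ 2) ^ k * ‖kacStep a b j x0 - x‖ ^ 2) := fun j =>
      mul_le_mul_of_nonneg_left (ih (kacStep a b j x0))
        (div_nonneg (by positivity) (frobSq_nonneg a))
    calc ∑ j : Fin m, (‖a j‖ ^ 2 / frobSq a) *
          ∑ ω' : Fin k → Fin m, (∏ i, ‖a (ω' i)‖ ^ 2 / frobSq a) *
            ‖kacIter a b (kacStep a b j x0) (List.ofFn ω') - x‖ ^ 2
        ≤ ∑ j : Fin m, (‖a j‖ ^ 2 / frobSq a) *
            ((1 - ((scaledCond a)⁻¹) ^ 2) ^ k * ‖kacStep a b j x0 - x‖ ^ 2) :=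
          Finset.sum_le_sum fun j _ => hstep1 j
      _ = (1 - ((scaledCond a)⁻¹) ^ 2) ^ k *
            ∑ j : Fin m, (‖a j‖ ^ 2 / frobSq a) * ‖kacStep a b j x0 - x‖ ^ 2 := by
          rw [Finset.mul_sum]; exact Finset.sum_congr rfl fun j _ => by ring
      _ ≤ (1 - ((scaledCond a)⁻¹) ^ 2) ^ k *
            ((1 - ((scaledCond a)⁻¹) ^ 2) * ‖x0 - x‖ ^ 2) :=
          mul_le_mul_of_nonneg_left (kacStep_exp a b x hx x0)
            (pow_nonneg (one_sub_nonneg' a) k)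
      _ = (1 - ((scaledCond a)⁻¹) ^ 2) ^ (k + 1) * ‖x0 - x‖ ^ 2 := by ring
end

section
/- Let A be an m×n complex matrix (m ≥ n) with full column rank, with rows a_1*, …, a_m*, and let x ∈ ℂⁿ satisfy ⟨a_j, x⟩ = b_j for all j. For any y ∈ ℂⁿ, if a random index J ∈ {1,…,m} is chosen with P(J = j) = ‖a_j‖₂²/‖A‖_F², and y' = y + ((b_J − ⟨a_J, y⟩)/‖a_J‖₂²)·a_J, then E‖y' − x‖₂² ≤ (1 − κ(A)^{-2})·‖y − x‖₂², where κ(A) = ‖A‖_F/σ_min(A). -/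
open scoped BigOperators

lemma sigmaMin_nonneg_s1 {m n : ℕ} (a : Fin m → EuclideanSpace ℂ (Fin n)) :
    0 ≤ sigmaMin a := by
  apply Real.sInf_nonneg
  rintro r ⟨z, hz, rfl⟩
  exact Real.sqrt_nonneg _

/-- Key spectral bound: `σ_min(A)² ‖z‖² ≤ ∑ j ‖⟨a j, z⟩‖²`. -/
lemma sigmaMin_sq_le {m n : ℕ} (a : Fin m → EuclideanSpace ℂ (Fin n))
    (z : EuclideanSpace ℂ (Fin n)) :
    sigmaMin a ^ 2 * ‖z‖ ^ 2 ≤ ∑ j, ‖(inner ℂ (a j) z : ℂ)‖ ^ 2 := by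
  rcases eq_or_ne z 0 with rfl | hz
  · simp
  unfold sigmaMin
  set S := {r : ℝ | ∃ z : EuclideanSpace ℂ (Fin n), ‖z‖ = 1 ∧
      r = Real.sqrt (∑ j, ‖(inner ℂ (a j) z : ℂ)‖ ^ 2)} with hS
  have hz' : ‖z‖ ≠ 0 := norm_ne_zero_iff.mpr hz
  set u : EuclideanSpace ℂ (Fin n) := ((‖z‖ : ℂ))⁻¹ • z with hu
  have hun : ‖u‖ = 1 := by
    rw [hu, norm_smul, norm_inv, Complex.norm_real, norm_norm, inv_mul_cancel₀ hz']
  have hbdd : BddBelow S := ⟨0, by rintro r ⟨w, hw, rfl⟩; exact Real.sqrt_nonneg _⟩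
  have hmem : Real.sqrt (∑ j, ‖(inner ℂ (a j) u : ℂ)‖ ^ 2) ∈ S := ⟨u, hun, rfl⟩
  have h1 : sInf S ≤ Real.sqrt (∑ j, ‖(inner ℂ (a j) u : ℂ)‖ ^ 2) := csInf_le hbdd hmem
  have h0 : 0 ≤ sInf S := sigmaMin_nonneg_s1 a
  have h2 : (sInf S) ^ 2 ≤ ∑ j, ‖(inner ℂ (a j) u : ℂ)‖ ^ 2 := by
    calc (sInf S) ^ 2 ≤ (Real.sqrt (∑ j, ‖(inner ℂ (a j) u : ℂ)‖ ^ 2)) ^ 2 :=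
          pow_le_pow_left₀ h0 h1 2
      _ = _ := Real.sq_sqrt (Finset.sum_nonneg fun j _ => by positivity)
  have h3 : ∀ j, ‖(inner ℂ (a j) u : ℂ)‖ ^ 2 = ‖z‖⁻¹ ^ 2 * ‖(inner ℂ (a j) z : ℂ)‖ ^ 2 := by
    intro j
    rw [hu, inner_smul_right]
    rw [norm_mul, norm_inv, Complex.norm_real, norm_norm, mul_pow]
  rw [Finset.sum_congr rfl (fun j _ => h3 j), ← Finset.mul_sum] at h2
  have hm := mul_le_mul_of_nonneg_right h2 (by positivity : (0:ℝ) ≤ ‖z‖ ^ 2)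
  calc (sInf S) ^ 2 * ‖z‖ ^ 2
      ≤ ‖z‖⁻¹ ^ 2 * (∑ j, ‖(inner ℂ (a j) z : ℂ)‖ ^ 2) * ‖z‖ ^ 2 := hm
    _ = _ := by field_simp

/-- Norm identity for one Kaczmarz projection. -/
lemma kac_norm_sq {n : ℕ} (a e : EuclideanSpace ℂ (Fin n)) (ha : a ≠ 0) :
    ‖e - (((inner ℂ a e : ℂ)) / ((‖a‖:ℂ)^2)) • a‖ ^ 2
      = ‖e‖ ^ 2 - ‖(inner ℂ a e : ℂ)‖ ^ 2 / ‖a‖ ^ 2 := by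
  have ha' : ‖a‖ ≠ 0 := norm_ne_zero_iff.mpr ha
  set c : ℂ := inner ℂ a e with hc
  have h := @norm_sub_sq ℂ _ _ _ _ e ((c / ((‖a‖:ℂ)^2)) • a)
  rw [h]
  rw [inner_smul_right, norm_smul]
  have hie : (inner ℂ e a : ℂ) = starRingEnd ℂ c := by rw [hc, ← inner_conj_symm]
  rw [hie]
  have hcc : c / ((‖a‖:ℂ)^2) * starRingEnd ℂ c = ((‖c‖^2 / ‖a‖^2 : ℝ) : ℂ) := by
    push_cast
    rw [div_mul_eq_mul_div, Complex.mul_conj']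
  rw [hcc]
  have hre : RCLike.re ((‖c‖^2 / ‖a‖^2 : ℝ) : ℂ) = ‖c‖^2 / ‖a‖^2 := RCLike.ofReal_re _
  rw [hre]
  have hnn : ‖c / ((‖a‖:ℂ)^2)‖ = ‖c‖ / ‖a‖^2 := by
    rw [norm_div]
    norm_num
  rw [hnn]
  field_simp
  ring

/-- **One-step expected decay of the randomized Kaczmarz method**:
if `J` is chosen with `P(J = j) = ‖a j‖²/‖A‖_F²` and `y'` is the Kaczmarz
update of `y` using row `J`, then `E ‖y' − x‖₂² ≤ (1 − κ(A)⁻²) ‖y − x‖₂²`. -/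
theorem randomized_kaczmarz_one_step
    (m n : ℕ) (hmn : n ≤ m)
    (a : Fin m → EuclideanSpace ℂ (Fin n)) (b : Fin m → ℂ)
    (hrank : ∀ z : EuclideanSpace ℂ (Fin n), (∀ j, (inner ℂ (a j) z : ℂ) = 0) → z = 0)
    (x : EuclideanSpace ℂ (Fin n)) (hx : ∀ j, (inner ℂ (a j) x : ℂ) = b j)
    (y : EuclideanSpace ℂ (Fin n)) :
    ∑ j : Fin m, (‖a j‖ ^ 2 / frobSq a) * ‖kacStep a b j y - x‖ ^ 2
      ≤ (1 - ((scaledCond a)⁻¹) ^ 2) * ‖y - x‖ ^ 2 := by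
  set e : EuclideanSpace ℂ (Fin n) := y - x with he
  set F : ℝ := frobSq a with hF
  have hF0 : 0 ≤ F := Finset.sum_nonneg fun j _ => by positivity
  -- one-step difference formula
  have hstep : ∀ j, kacStep a b j y - x
      = e - (((inner ℂ (a j) e : ℂ)) / ((‖a j‖:ℂ)^2)) • a j := by
    intro j
    have hnum : b j - (inner ℂ (a j) y : ℂ) = -(inner ℂ (a j) e : ℂ) := by
      rw [he, inner_sub_right, ← hx j]; ring
    rw [kacStep, hnum, neg_div, neg_smul, he]
    abel
  rcases eq_or_lt_of_le hF0 with hFz | hFpos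
  · -- degenerate case: all rows vanish
    have hax : ∀ j, a j = 0 := by
      intro j
      have : ∑ j, ‖a j‖ ^ 2 = 0 := hFz.symm
      have hj : ‖a j‖ ^ 2 = 0 := by
        have := (Finset.sum_eq_zero_iff_of_nonneg
          (fun j _ => by positivity : ∀ j ∈ Finset.univ, (0:ℝ) ≤ ‖a j‖ ^ 2)).mp this j
          (Finset.mem_univ j)
        exact this
      have : ‖a j‖ = 0 := by nlinarith [norm_nonneg (a j)]
      exact norm_eq_zero.mp this
    have hex : e = 0 := hrank e (fun j => by rw [hax j, inner_zero_left])
    have hlhs : ∀ j : Fin m, (‖a j‖ ^ 2 / F) * ‖kacStep a b j y - x‖ ^ 2 = 0 := by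
      intro j
      rw [hax j]
      simp
    rw [Finset.sum_congr rfl (fun j _ => hlhs j)]
    simp [hex]
  · -- main case: F > 0
    have hFne : F ≠ 0 := ne_of_gt hFpos
    -- per-term identity
    have hterm : ∀ j : Fin m, (‖a j‖ ^ 2 / F) * ‖kacStep a b j y - x‖ ^ 2
        = (‖a j‖ ^ 2 / F) * ‖e‖ ^ 2 - ‖(inner ℂ (a j) e : ℂ)‖ ^ 2 / F := by
      intro j
      rw [hstep j]
      rcases eq_or_ne (a j) 0 with haj | haj
      · rw [haj]; simp
      · rw [kac_norm_sq (a j) e haj]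
        have haj' : ‖a j‖ ≠ 0 := norm_ne_zero_iff.mpr haj
        field_simp
    rw [Finset.sum_congr rfl (fun j _ => hterm j)]
    rw [Finset.sum_sub_distrib, ← Finset.sum_mul, ← Finset.sum_div, ← Finset.sum_div]
    have hsum1 : (∑ j : Fin m, ‖a j‖ ^ 2) / F = 1 := by
      exact div_self hFne
    rw [hsum1, one_mul]
    -- condition number computation
    have hcond : ((scaledCond a)⁻¹) ^ 2 = sigmaMin a ^ 2 / F := by
      rw [scaledCond, inv_div, div_pow, Real.sq_sqrt hF0]
    rw [hcond]
    have hkey : sigmaMin a ^ 2 * ‖e‖ ^ 2 ≤ ∑ j, ‖(inner ℂ (a j) e : ℂ)‖ ^ 2 :=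
      sigmaMin_sq_le a e
    have hdiv : sigmaMin a ^ 2 * ‖e‖ ^ 2 / F ≤ (∑ j, ‖(inner ℂ (a j) e : ℂ)‖ ^ 2) / F :=
      div_le_div_of_nonneg_right hkey hFpos.le
    have hring : (1 - sigmaMin a ^ 2 / F) * ‖e‖ ^ 2
        = ‖e‖ ^ 2 - sigmaMin a ^ 2 * ‖e‖ ^ 2 / F := by ring
    linarith
end

section
/- Let e ∈ ℝⁿ be a unit vector. For x ∈ ℝⁿ with ‖x‖₂ ≤ 1 and z ∈ ℝⁿ with ‖z‖₂ = 1, write x' = ⟨x, e⟩, x'' = x − x'e, z' = ⟨z, e⟩, z'' = z − z'e, and set x₁ = x − ⟨x, z⟩z and x₁'' = x₁ − ⟨x₁, e⟩e. Then ‖x₁''‖₂² − ‖x''‖₂² ≤ |z'|² − ⟨x'', z''⟩². -/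
/-- **Effect of one random projection on the orthogonal component**:
with `x' = ⟨x,e⟩`, `x'' = x − x'e`, `z' = ⟨z,e⟩`, `z'' = z − z'e`,
`x₁ = x − ⟨x,z⟩z`, and `x₁'' = x₁ − ⟨x₁,e⟩e`, one has
`‖x₁''‖² − ‖x''‖² ≤ |z'|² − ⟨x'', z''⟩²`. -/
theorem projection_orthogonal_component_change
    (n : ℕ) (e x z : EuclideanSpace ℝ (Fin n))
    (he : ‖e‖ = 1) (hx : ‖x‖ ≤ 1) (hz : ‖z‖ = 1) :
    ‖(x - (inner ℝ x z : ℝ) • z) - (inner ℝ (x - (inner ℝ x z : ℝ) • z) e : ℝ) • e‖ ^ 2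
        - ‖x - (inner ℝ x e : ℝ) • e‖ ^ 2
      ≤ |(inner ℝ z e : ℝ)| ^ 2
        - (inner ℝ (x - (inner ℝ x e : ℝ) • e) (z - (inner ℝ z e : ℝ) • e) : ℝ) ^ 2 := by
  have hee : (inner ℝ e e : ℝ) = 1 := by
    rw [real_inner_self_eq_norm_sq, he]; norm_num
  have hzz : (inner ℝ z z : ℝ) = 1 := by
    rw [real_inner_self_eq_norm_sq, hz]; norm_num
  have hxe : (inner ℝ x e : ℝ) ^ 2 ≤ 1 := by
    have h1 := abs_real_inner_le_norm x e
    have h2 : |(inner ℝ x e : ℝ)| ≤ 1 := by rw [he, mul_one] at h1; exact h1.trans hx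
    nlinarith [abs_nonneg (inner ℝ x e : ℝ), sq_abs (inner ℝ x e : ℝ)]
  have key : (0:ℝ) ≤ (inner ℝ z e : ℝ)^2 * (1 - (inner ℝ x e : ℝ)^2 + (inner ℝ x z : ℝ)^2) := by
    have : (0:ℝ) ≤ 1 - (inner ℝ x e : ℝ)^2 + (inner ℝ x z : ℝ)^2 := by
      nlinarith [sq_nonneg (inner ℝ x z : ℝ)]
    positivity
  rw [← real_inner_self_eq_norm_sq, ← real_inner_self_eq_norm_sq, sq_abs]
  simp only [inner_sub_left, inner_sub_right, real_inner_smul_left, real_inner_smul_right,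
    hee, hzz]
  rw [real_inner_comm z e, real_inner_comm x z, real_inner_comm x e]
  nlinarith [key]
end

section
/- Let x_0 ∈ ℝⁿ be a unit vector and let z_1, …, z_k ∈ ℝⁿ be unit vectors. Define recursively x_j = x_{j-1} − ⟨x_{j-1}, z_j⟩·z_j for j = 1, …, k. Then |⟨x_k, x_0⟩ − 1| ≤ 2·Σ_{j=1}^k ⟨z_j, x_0⟩². In particular, ‖x_k‖₂ ≥ ⟨x_k, x_0⟩ ≥ 1 − 2·Σ_{j=1}^k ⟨z_j, x_0⟩². -/
open scoped BigOperators

/-- The sequence of successive orthogonal projections of `x0` onto the hyperplanes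
through the origin with unit normals `zs 0, zs 1, …`:
`x_{j+1} = x_j − ⟨x_j, z_{j+1}⟩ z_{j+1}` (here `zs j` is the normal used at step `j+1`). -/
noncomputable def projSeq {n : ℕ} (x0 : EuclideanSpace ℝ (Fin n))
    (zs : ℕ → EuclideanSpace ℝ (Fin n)) : ℕ → EuclideanSpace ℝ (Fin n)
  | 0 => x0
  | j + 1 => projSeq x0 zs j - (inner ℝ (projSeq x0 zs j) (zs j) : ℝ) • zs j

lemma projSeq_norm_sq {n : ℕ} (x0 : EuclideanSpace ℝ (Fin n))
    (zs : ℕ → EuclideanSpace ℝ (Fin n)) (k : ℕ) (hzs : ∀ j, j < k → ‖zs j‖ = 1) :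
    ‖projSeq x0 zs k‖ ^ 2
      = ‖x0‖ ^ 2 - ∑ j ∈ Finset.range k, (inner ℝ (projSeq x0 zs j) (zs j) : ℝ) ^ 2 := by
  induction k with
  | zero => simp [projSeq]
  | succ m ih =>
    have hz : ‖zs m‖ = 1 := hzs m (Nat.lt_succ_self m)
    have ih' := ih (fun j hj => hzs j (hj.trans (Nat.lt_succ_self m)))
    have key : ‖projSeq x0 zs (m + 1)‖ ^ 2
        = ‖projSeq x0 zs m‖ ^ 2 - (inner ℝ (projSeq x0 zs m) (zs m) : ℝ) ^ 2 := by
      set x := projSeq x0 zs m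
      set c : ℝ := inner ℝ x (zs m)
      have : projSeq x0 zs (m + 1) = x - c • zs m := rfl
      rw [this, @norm_sub_sq_real]
      rw [real_inner_smul_right, norm_smul, Real.norm_eq_abs]
      rw [hz]
      have : (|c| * 1) ^ 2 = c ^ 2 := by rw [mul_one, sq_abs]
      rw [this]; ring
    rw [key, ih', Finset.sum_range_succ]; ring

lemma projSeq_inner_x0 {n : ℕ} (x0 : EuclideanSpace ℝ (Fin n))
    (zs : ℕ → EuclideanSpace ℝ (Fin n)) (k : ℕ) :
    (inner ℝ (projSeq x0 zs k) x0 : ℝ)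
      = ‖x0‖ ^ 2 - ∑ j ∈ Finset.range k,
          (inner ℝ (projSeq x0 zs j) (zs j) : ℝ) * (inner ℝ (zs j) x0 : ℝ) := by
  induction k with
  | zero =>
    simp only [projSeq, Finset.range_zero, Finset.sum_empty, sub_zero]
    exact real_inner_self_eq_norm_sq x0
  | succ m ih =>
    have : projSeq x0 zs (m + 1)
        = projSeq x0 zs m - (inner ℝ (projSeq x0 zs m) (zs m) : ℝ) • zs m := rfl
    rw [this, inner_sub_left, real_inner_smul_left, ih, Finset.sum_range_succ]
    ring

/-- **Cumulative drift of the exceptional coordinate under `k` projections**: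
`|⟨x_k, x0⟩ − 1| ≤ 2 ∑_{j<k} ⟨z_j, x0⟩²`, hence
`‖x_k‖₂ ≥ ⟨x_k, x0⟩ ≥ 1 − 2 ∑_{j<k} ⟨z_j, x0⟩²`. -/
theorem successive_projections_drift
    (n k : ℕ) (x0 : EuclideanSpace ℝ (Fin n)) (hx0 : ‖x0‖ = 1)
    (zs : ℕ → EuclideanSpace ℝ (Fin n)) (hzs : ∀ j, j < k → ‖zs j‖ = 1) :
    |(inner ℝ (projSeq x0 zs k) x0 : ℝ) - 1|
        ≤ 2 * ∑ j ∈ Finset.range k, (inner ℝ (zs j) x0 : ℝ) ^ 2 ∧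
      (inner ℝ (projSeq x0 zs k) x0 : ℝ) ≤ ‖projSeq x0 zs k‖ ∧
      1 - 2 * ∑ j ∈ Finset.range k, (inner ℝ (zs j) x0 : ℝ) ^ 2
        ≤ (inner ℝ (projSeq x0 zs k) x0 : ℝ) := by
  set t : ℝ := inner ℝ (projSeq x0 zs k) x0 with ht
  set S : ℝ := ∑ j ∈ Finset.range k, (inner ℝ (zs j) x0 : ℝ) ^ 2 with hS
  set A : ℝ := ∑ j ∈ Finset.range k, (inner ℝ (projSeq x0 zs j) (zs j) : ℝ) ^ 2 with hA
  have hN : ‖projSeq x0 zs k‖ ^ 2 = 1 - A := by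
    rw [hA, projSeq_norm_sq x0 zs k hzs, hx0]; ring
  have htsum : t = 1 - ∑ j ∈ Finset.range k,
      (inner ℝ (projSeq x0 zs j) (zs j) : ℝ) * (inner ℝ (zs j) x0 : ℝ) := by
    rw [ht, projSeq_inner_x0, hx0]; ring
  have hCS : (∑ j ∈ Finset.range k,
      (inner ℝ (projSeq x0 zs j) (zs j) : ℝ) * (inner ℝ (zs j) x0 : ℝ)) ^ 2 ≤ A * S :=
    Finset.sum_mul_sq_le_sq_mul_sq _ _ _
  have htN : t ≤ ‖projSeq x0 zs k‖ := by
    have := real_inner_le_norm (projSeq x0 zs k) x0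
    rwa [hx0, mul_one] at this
  have habs : |t| ≤ ‖projSeq x0 zs k‖ := by
    have := abs_real_inner_le_norm (projSeq x0 zs k) x0
    rwa [hx0, mul_one] at this
  have ht2 : t ^ 2 ≤ 1 - A := by
    rw [← hN]
    calc t ^ 2 = |t| ^ 2 := (sq_abs t).symm
    _ ≤ ‖projSeq x0 zs k‖ ^ 2 := by
        apply pow_le_pow_left₀ (abs_nonneg t) habs
  have hSnn : 0 ≤ S := Finset.sum_nonneg fun j _ => sq_nonneg _
  have hAnn : 0 ≤ A := Finset.sum_nonneg fun j _ => sq_nonneg _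
  have hkey : (1 - t) ^ 2 ≤ (1 - t ^ 2) * S := by
    have h1 : (1 - t) ^ 2 = (∑ j ∈ Finset.range k,
        (inner ℝ (projSeq x0 zs j) (zs j) : ℝ) * (inner ℝ (zs j) x0 : ℝ)) ^ 2 := by
      rw [htsum]; ring
    calc (1 - t) ^ 2 = _ := h1
    _ ≤ A * S := hCS
    _ ≤ (1 - t ^ 2) * S := mul_le_mul_of_nonneg_right (by linarith) hSnn
  have ht1 : t ≤ 1 := by nlinarith
  have hmain : 1 - t ≤ 2 * S := by nlinarith [sq_nonneg (1 - t)]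
  refine ⟨?_, htN, by linarith⟩
  rw [abs_sub_comm, abs_of_nonneg (by linarith)]
  linarith
end

section
/- Let A be an m×n complex matrix (m ≥ n) with nonzero rows a_1*, …, a_m*, and suppose A*A = σ²·I_n for some σ > 0 (equivalently, k(A) = 1). Let x solve Ax = b, and let (x_k) be the randomized Kaczmarz iterates with row j chosen with probability ‖a_j‖₂²/‖A‖_F² at each step, independently. Then equality holds in the convergence estimate: E‖x_k − x‖₂² = (1 − κ(A)^{-2})^k · ‖x_0 − x‖₂² for all k ≥ 0, where κ(A) = ‖A‖_F/σ. -/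
open scoped BigOperators

lemma kacStep_sub_norm {m n : ℕ} (a : Fin m → EuclideanSpace ℂ (Fin n))
    (ha : ∀ j, a j ≠ 0) (b : Fin m → ℂ) (x : EuclideanSpace ℂ (Fin n))
    (hx : ∀ j, (inner ℂ (a j) x : ℂ) = b j) (j : Fin m) (y : EuclideanSpace ℂ (Fin n)) :
    ‖kacStep a b j y - x‖ ^ 2
      = ‖y - x‖ ^ 2 - ‖(inner ℂ (a j) (y - x) : ℂ)‖ ^ 2 / ‖a j‖ ^ 2 := by
  have hne : (‖a j‖ : ℝ) ≠ 0 := norm_ne_zero_iff.mpr (ha j)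
  have hneC : ((‖a j‖ : ℂ)) ^ 2 ≠ 0 := by
    simpa using pow_ne_zero 2 (by exact_mod_cast hne : ((‖a j‖ : ℂ)) ≠ 0)
  set e : EuclideanSpace ℂ (Fin n) := y - x with he
  set c : ℂ := inner ℂ (a j) e with hc
  set v : EuclideanSpace ℂ (Fin n) := (c / ((‖a j‖ : ℂ) ^ 2)) • a j with hv
  have hbc : b j - (inner ℂ (a j) y : ℂ) = -c := by
    rw [← hx j, hc, he, inner_sub_right]; ring
  have hstep : kacStep a b j y - x = e - v := by
    rw [kacStep, hbc, he, hv]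
    rw [neg_div, neg_smul, sub_eq_add_neg, sub_eq_add_neg]
    abel
  have hav : (inner ℂ (a j) v : ℂ) = c := by
    rw [hv, inner_smul_right, inner_self_eq_norm_sq_to_K (𝕜 := ℂ)]
    field_simp
    exact mul_div_cancel_right₀ c hneC
  have horth : (inner ℂ v (e - v) : ℂ) = 0 := by
    rw [inner_sub_right, hv, inner_smul_left, inner_smul_left, ← hc,
      ← hv, hav]
    ring
  have hpyth : ‖e‖ ^ 2 = ‖e - v‖ ^ 2 + ‖v‖ ^ 2 := by
    have : e = (e - v) + v := by abel
    rw [this, norm_add_sq (𝕜 := ℂ)]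
    have : (inner ℂ (e - v) v : ℂ) = 0 := by
      rw [← inner_conj_symm, horth, map_zero]
    rw [this]
    simp
  have h2 : ‖v‖ ^ 2 = ‖c‖ ^ 2 / ‖a j‖ ^ 2 := by
    rw [hv, norm_smul, mul_pow, norm_div, div_pow, norm_pow]
    simp only [Complex.norm_real, Real.norm_eq_abs, abs_norm]
    field_simp
  rw [hstep]
  rw [h2] at hpyth
  linarith [hpyth]

lemma kac_one_step {m n : ℕ} (a : Fin m → EuclideanSpace ℂ (Fin n))
    (ha : ∀ j, a j ≠ 0) (σ : ℝ)
    (hiso : ∀ z : EuclideanSpace ℂ (Fin n),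
      ∑ j, ‖(inner ℂ (a j) z : ℂ)‖ ^ 2 = σ ^ 2 * ‖z‖ ^ 2)
    (b : Fin m → ℂ) (x : EuclideanSpace ℂ (Fin n))
    (hx : ∀ j, (inner ℂ (a j) x : ℂ) = b j)
    (hF : 0 < frobSq a) (y : EuclideanSpace ℂ (Fin n)) :
    ∑ j, ‖a j‖ ^ 2 / frobSq a * ‖kacStep a b j y - x‖ ^ 2
      = (1 - σ ^ 2 / frobSq a) * ‖y - x‖ ^ 2 := by
  have h1 : ∀ j, ‖a j‖ ^ 2 / frobSq a * ‖kacStep a b j y - x‖ ^ 2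
      = ‖a j‖ ^ 2 / frobSq a * ‖y - x‖ ^ 2
        - ‖(inner ℂ (a j) (y - x) : ℂ)‖ ^ 2 / frobSq a := by
    intro j
    have hne : (‖a j‖ : ℝ) ≠ 0 := norm_ne_zero_iff.mpr (ha j)
    rw [kacStep_sub_norm a ha b x hx j y]
    field_simp
  rw [Finset.sum_congr rfl (fun j _ => h1 j), Finset.sum_sub_distrib,
    ← Finset.sum_div, hiso, ← Finset.sum_mul, ← Finset.sum_div, ← frobSq]
  field_simp

/-- **The convergence estimate is attained when `k(A) = 1`**: if `A*A = σ²·I`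
(equivalently `‖Az‖₂ = σ‖z‖₂` for all `z`, i.e. `∑ j |⟨a j, z⟩|² = σ²‖z‖₂²`),
then the randomized Kaczmarz iterates satisfy
`E ‖x_k − x‖₂² = (1 − κ(A)⁻²)^k ‖x0 − x‖₂²` with `κ(A) = ‖A‖_F/σ`. -/
theorem randomized_kaczmarz_equality_for_isometry
    (m n : ℕ) (hmn : n ≤ m)
    (a : Fin m → EuclideanSpace ℂ (Fin n)) (ha : ∀ j, a j ≠ 0)
    (σ : ℝ) (hσ : 0 < σ)
    (hiso : ∀ z : EuclideanSpace ℂ (Fin n),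
      ∑ j, ‖(inner ℂ (a j) z : ℂ)‖ ^ 2 = σ ^ 2 * ‖z‖ ^ 2)
    (b : Fin m → ℂ)
    (x : EuclideanSpace ℂ (Fin n)) (hx : ∀ j, (inner ℂ (a j) x : ℂ) = b j)
    (x0 : EuclideanSpace ℂ (Fin n)) (k : ℕ) :
    ∑ ω : Fin k → Fin m,
        (∏ i, ‖a (ω i)‖ ^ 2 / frobSq a) * ‖kacIter a b x0 (List.ofFn ω) - x‖ ^ 2
      = (1 - ((Real.sqrt (frobSq a) / σ)⁻¹) ^ 2) ^ k * ‖x0 - x‖ ^ 2 := by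
  classical
  rcases Nat.eq_zero_or_pos n with hn | hn
  · subst hn
    have hsub : ∀ u v : EuclideanSpace ℂ (Fin 0), u - v = 0 := by
      intro u v
      ext i
      exact i.elim0
    simp [hsub]
  · have hm : 0 < m := by
      rcases Nat.eq_zero_or_pos m with hm0 | hm0
      · exfalso
        subst hm0
        have h := hiso (EuclideanSpace.single (⟨0, hn⟩ : Fin n) 1)
        simp [EuclideanSpace.norm_single] at h
        nlinarith [hσ]
      · exact hm0
    have hF : 0 < frobSq a := by
      rw [frobSq]
      apply Finset.sum_pos
      · intro j _
        have := norm_pos_iff.mpr (ha j)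
        positivity
      · haveI : Nonempty (Fin m) := ⟨⟨0, hm⟩⟩
        exact Finset.univ_nonempty
    have hcoef : ((Real.sqrt (frobSq a) / σ)⁻¹) ^ 2 = σ ^ 2 / frobSq a := by
      rw [inv_div, div_pow, Real.sq_sqrt hF.le]
    rw [hcoef]
    induction k generalizing x0 with
    | zero => simp [kacIter]
    | succ k ih =>
      have hsum :
          ∑ ω : Fin (k+1) → Fin m,
              (∏ i, ‖a (ω i)‖ ^ 2 / frobSq a) * ‖kacIter a b x0 (List.ofFn ω) - x‖ ^ 2
            = ∑ j : Fin m, ‖a j‖ ^ 2 / frobSq a *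
                ∑ ω : Fin k → Fin m,
                  (∏ i, ‖a (ω i)‖ ^ 2 / frobSq a) *
                    ‖kacIter a b (kacStep a b j x0) (List.ofFn ω) - x‖ ^ 2 := by
        rw [← Equiv.sum_comp (Fin.consEquiv fun _ => Fin m), Fintype.sum_prod_type]
        refine Finset.sum_congr rfl fun j _ => ?_
        rw [Finset.mul_sum]
        refine Finset.sum_congr rfl fun ω _ => ?_
        simp only [Fin.consEquiv_apply, Fin.prod_univ_succ, Fin.cons_zero, Fin.cons_succ,
          List.ofFn_succ, kacIter, List.foldl_cons]
        ring
      rw [hsum]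
      calc ∑ j : Fin m, ‖a j‖ ^ 2 / frobSq a *
              ∑ ω : Fin k → Fin m,
                (∏ i, ‖a (ω i)‖ ^ 2 / frobSq a) *
                  ‖kacIter a b (kacStep a b j x0) (List.ofFn ω) - x‖ ^ 2
          = ∑ j : Fin m, ‖a j‖ ^ 2 / frobSq a *
              ((1 - σ ^ 2 / frobSq a) ^ k * ‖kacStep a b j x0 - x‖ ^ 2) := by
            exact Finset.sum_congr rfl fun j _ => by rw [ih (kacStep a b j x0)]
        _ = (1 - σ ^ 2 / frobSq a) ^ k *
              ∑ j : Fin m, ‖a j‖ ^ 2 / frobSq a * ‖kacStep a b j x0 - x‖ ^ 2 := by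
            rw [Finset.mul_sum]
            exact Finset.sum_congr rfl fun j _ => by ring
        _ = (1 - σ ^ 2 / frobSq a) ^ k * ((1 - σ ^ 2 / frobSq a) * ‖x0 - x‖ ^ 2) := by
            rw [kac_one_step a ha σ hiso b x hx hF x0]
        _ = (1 - σ ^ 2 / frobSq a) ^ (k + 1) * ‖x0 - x‖ ^ 2 := by ring
end

section
/- Let A be an m×n complex matrix (m ≥ n) with full column rank and nonzero rows, let x solve Ax = b, and let (x_k) be the randomized Kaczmarz iterates with row j chosen with probability ‖a_j‖₂²/‖A‖_F² at each step, independently. Then for every ε ∈ (0,1) and every integer k ≥ 2κ(A)²·log(1/ε), one has E‖x_k − x‖₂² ≤ ε²·‖x_0 − x‖₂², where κ(A) = ‖A‖_F/σ_min(A). -/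
open scoped BigOperators

private theorem errSq' {n : ℕ} (a : EuclideanSpace ℂ (Fin n)) (ha : a ≠ 0)
    (e : EuclideanSpace ℂ (Fin n)) :
    ‖e - ((inner ℂ a e : ℂ) / ((‖a‖ : ℂ) ^ 2)) • a‖ ^ 2
      = ‖e‖ ^ 2 - ‖(inner ℂ a e : ℂ)‖ ^ 2 / ‖a‖ ^ 2 := by
  have hna : (0:ℝ) < ‖a‖ := norm_pos_iff.mpr ha
  set c : ℂ := (inner ℂ a e : ℂ) / ((‖a‖ : ℂ) ^ 2) with hc
  have h1 : ‖e - c • a‖ ^ 2 = ‖e‖ ^ 2 - 2 * RCLike.re (inner ℂ e (c • a) : ℂ) + ‖c • a‖ ^ 2 :=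
    norm_sub_sq e (c • a)
  set w : ℂ := (inner ℂ a e : ℂ) with hw
  have hea : (inner ℂ e a : ℂ) = starRingEnd ℂ w := by rw [hw, ← inner_conj_symm]
  have h4 : (inner ℂ e (c • a) : ℂ) = ((‖w‖ ^ 2 / ‖a‖ ^ 2 : ℝ) : ℂ) := by
    rw [inner_smul_right, hea, hc, div_mul_eq_mul_div, Complex.mul_conj']
    push_cast
    ring
  have h5 : ‖c • a‖ ^ 2 = ‖w‖ ^ 2 / ‖a‖ ^ 2 := by
    rw [norm_smul, mul_pow, hc, norm_div]
    have h6 : ‖((‖a‖ : ℂ) ^ 2)‖ = ‖a‖ ^ 2 := by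
      rw [norm_pow, Complex.norm_real, Real.norm_of_nonneg hna.le]
    rw [h6, div_pow]
    field_simp
  rw [h1, h4, h5]
  rw [show RCLike.re (((‖w‖ ^ 2 / ‖a‖ ^ 2 : ℝ)) : ℂ) = ‖w‖ ^ 2 / ‖a‖ ^ 2 from Complex.ofReal_re _]
  ring

set_option maxHeartbeats 1000000 in
/-- **Iteration count for accuracy ε**: for every `ε ∈ (0,1)` and every
`k ≥ 2κ(A)² log(1/ε)`, one has `E ‖x_k − x‖₂² ≤ ε² ‖x0 − x‖₂²`. -/
theorem randomized_kaczmarz_iteration_count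
    (m n : ℕ) (hmn : n ≤ m)
    (a : Fin m → EuclideanSpace ℂ (Fin n)) (ha : ∀ j, a j ≠ 0) (b : Fin m → ℂ)
    (hrank : ∀ z : EuclideanSpace ℂ (Fin n), (∀ j, (inner ℂ (a j) z : ℂ) = 0) → z = 0)
    (x : EuclideanSpace ℂ (Fin n)) (hx : ∀ j, (inner ℂ (a j) x : ℂ) = b j)
    (x0 : EuclideanSpace ℂ (Fin n))
    (ε : ℝ) (hε : ε ∈ Set.Ioo (0 : ℝ) 1)
    (k : ℕ) (hk : 2 * (scaledCond a) ^ 2 * Real.log (1 / ε) ≤ k) :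
    ∑ ω : Fin k → Fin m,
        (∏ i, ‖a (ω i)‖ ^ 2 / frobSq a) * ‖kacIter a b x0 (List.ofFn ω) - x‖ ^ 2
      ≤ ε ^ 2 * ‖x0 - x‖ ^ 2 := by
  obtain ⟨hε0, hε1⟩ := hε
  rcases Nat.eq_zero_or_pos n with hn0 | hn
  · -- trivial case n = 0
    subst hn0
    have hz : ∀ v : EuclideanSpace ℂ (Fin 0), ‖v‖ = 0 := by
      intro v
      rw [EuclideanSpace.norm_eq]
      simp
    have : ∀ ω : Fin k → Fin m,
        (∏ i, ‖a (ω i)‖ ^ 2 / frobSq a) * ‖kacIter a b x0 (List.ofFn ω) - x‖ ^ 2 = 0 := by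
      intro ω; rw [hz]; ring
    rw [Finset.sum_congr rfl (fun ω _ => this ω), Finset.sum_const, smul_zero]
    positivity
  · -- main case
    have hm : 0 < m := lt_of_lt_of_le hn hmn
    set F : ℝ := frobSq a with hF
    have hFpos : 0 < F := by
      rw [hF, frobSq]
      exact Finset.sum_pos (fun j _ => pow_pos (norm_pos_iff.mpr (ha j)) 2)
        ⟨⟨0, hm⟩, Finset.mem_univ _⟩
    set S : Set ℝ := {r : ℝ | ∃ z : EuclideanSpace ℂ (Fin n), ‖z‖ = 1 ∧
        r = Real.sqrt (∑ j, ‖(inner ℂ (a j) z : ℂ)‖ ^ 2)} with hS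
    have hσdef : sigmaMin a = sInf S := rfl
    have hbdd : BddBelow S := ⟨0, by rintro r ⟨z, hz, rfl⟩; exact Real.sqrt_nonneg _⟩
    have hz1 : ∃ z : EuclideanSpace ℂ (Fin n), ‖z‖ = 1 := by
      refine ⟨EuclideanSpace.single ⟨0, hn⟩ 1, ?_⟩
      rw [EuclideanSpace.norm_single]; simp
    have hne : S.Nonempty := by
      obtain ⟨z, hz⟩ := hz1
      exact ⟨_, z, hz, rfl⟩
    have hσle : ∀ z : EuclideanSpace ℂ (Fin n), ‖z‖ = 1 →
        sigmaMin a ≤ Real.sqrt (∑ j, ‖(inner ℂ (a j) z : ℂ)‖ ^ 2) := by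
      intro z hz
      exact csInf_le hbdd ⟨z, hz, rfl⟩
    have hσ0 : 0 ≤ sigmaMin a := by
      rw [hσdef]
      exact le_csInf hne (by rintro r ⟨z, hz, rfl⟩; exact Real.sqrt_nonneg _)
    -- positivity of sigma
    have hf : Continuous fun z : EuclideanSpace ℂ (Fin n) =>
        Real.sqrt (∑ j, ‖(inner ℂ (a j) z : ℂ)‖ ^ 2) := by
      apply Real.continuous_sqrt.comp
      exact continuous_finset_sum _ fun j _ => ((continuous_const.inner continuous_id).norm.pow 2)
    obtain ⟨z0, hz0mem, hz0min⟩ :=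
      (isCompact_sphere (0 : EuclideanSpace ℂ (Fin n)) 1).exists_isMinOn
        (by obtain ⟨z, hz⟩ := hz1; exact ⟨z, by simpa using hz⟩) hf.continuousOn
    have hz0 : ‖z0‖ = 1 := by simpa using hz0mem
    have hσpos : 0 < sigmaMin a := by
      have hpos : 0 < Real.sqrt (∑ j, ‖(inner ℂ (a j) z0 : ℂ)‖ ^ 2) := by
        apply Real.sqrt_pos.mpr
        have hjex : ∃ j, (inner ℂ (a j) z0 : ℂ) ≠ 0 := by
          by_contra h
          push_neg at h
          rw [hrank z0 h] at hz0; simp at hz0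
        obtain ⟨j, hj⟩ := hjex
        exact Finset.sum_pos' (fun i _ => by positivity)
          ⟨j, Finset.mem_univ j, pow_pos (norm_pos_iff.mpr hj) 2⟩
      refine lt_of_lt_of_le hpos ?_
      rw [hσdef]
      apply le_csInf hne
      rintro r ⟨z, hz, rfl⟩
      exact hz0min (by simpa using hz)
    -- sigma^2 ≤ F
    have hσF : sigmaMin a ^ 2 ≤ F := by
      obtain ⟨z, hz⟩ := hz1
      have h1 := hσle z hz
      have h2 : (∑ j, ‖(inner ℂ (a j) z : ℂ)‖ ^ 2) ≤ F := by
        rw [hF, frobSq]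
        apply Finset.sum_le_sum
        intro j _
        calc ‖(inner ℂ (a j) z : ℂ)‖ ^ 2 ≤ (‖a j‖ * ‖z‖) ^ 2 := by
              apply pow_le_pow_left₀ (norm_nonneg _)
              exact norm_inner_le_norm _ _
          _ = ‖a j‖ ^ 2 := by rw [hz]; ring
      calc sigmaMin a ^ 2 ≤ Real.sqrt (∑ j, ‖(inner ℂ (a j) z : ℂ)‖ ^ 2) ^ 2 :=
            pow_le_pow_left₀ hσ0 h1 2
        _ = ∑ j, ‖(inner ℂ (a j) z : ℂ)‖ ^ 2 := Real.sq_sqrt (by positivity)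
        _ ≤ F := h2
    set t : ℝ := sigmaMin a ^ 2 / F with ht
    have ht0 : 0 < t := div_pos (pow_pos hσpos 2) hFpos
    have ht1 : t ≤ 1 := (div_le_one hFpos).mpr hσF
    set q : ℝ := 1 - t with hq
    have hq0 : 0 ≤ q := by linarith
    -- lower bound lemma
    have hLB : ∀ e : EuclideanSpace ℂ (Fin n),
        sigmaMin a ^ 2 * ‖e‖ ^ 2 ≤ ∑ j, ‖(inner ℂ (a j) e : ℂ)‖ ^ 2 := by
      intro e
      by_cases he : e = 0
      · subst he; simp
      · have hne' : (0:ℝ) < ‖e‖ := norm_pos_iff.mpr he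
        set z : EuclideanSpace ℂ (Fin n) := ((‖e‖⁻¹ : ℝ) : ℂ) • e with hzdef
        have hz : ‖z‖ = 1 := by
          rw [hzdef, norm_smul, Complex.norm_real, Real.norm_of_nonneg (by positivity)]
          field_simp
        have hinner : ∀ j, ‖(inner ℂ (a j) z : ℂ)‖ ^ 2 = ‖e‖⁻¹ ^ 2 * ‖(inner ℂ (a j) e : ℂ)‖ ^ 2 := by
          intro j
          rw [hzdef, inner_smul_right, norm_mul, Complex.norm_real,
            Real.norm_of_nonneg (by positivity)]
          ring
        have h1 := hσle z hz
        have h2 : sigmaMin a ^ 2 ≤ ∑ j, ‖(inner ℂ (a j) z : ℂ)‖ ^ 2 := by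
          calc sigmaMin a ^ 2 ≤ Real.sqrt (∑ j, ‖(inner ℂ (a j) z : ℂ)‖ ^ 2) ^ 2 :=
                pow_le_pow_left₀ hσ0 h1 2
            _ = _ := Real.sq_sqrt (by positivity)
        have h3 : ∑ j, ‖(inner ℂ (a j) z : ℂ)‖ ^ 2
            = ‖e‖⁻¹ ^ 2 * ∑ j, ‖(inner ℂ (a j) e : ℂ)‖ ^ 2 := by
          rw [Finset.mul_sum]
          exact Finset.sum_congr rfl fun j _ => hinner j
        rw [h3] at h2
        have := mul_le_mul_of_nonneg_right h2 (le_of_lt (pow_pos hne' 2))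
        calc sigmaMin a ^ 2 * ‖e‖ ^ 2 ≤ ‖e‖⁻¹ ^ 2 * (∑ j, ‖(inner ℂ (a j) e : ℂ)‖ ^ 2) * ‖e‖ ^ 2 :=
              this
          _ = ∑ j, ‖(inner ℂ (a j) e : ℂ)‖ ^ 2 := by
              field_simp
    -- one-step contraction
    have hone : ∀ y : EuclideanSpace ℂ (Fin n),
        ∑ j, ‖a j‖ ^ 2 / F * ‖kacStep a b j y - x‖ ^ 2 ≤ q * ‖y - x‖ ^ 2 := by
      intro y
      have hstep : ∀ j, kacStep a b j y - x
          = (y - x) - ((inner ℂ (a j) (y - x) : ℂ) / ((‖a j‖ : ℂ) ^ 2)) • a j := by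
        intro j
        rw [kacStep, ← hx j]
        have h1 : (inner ℂ (a j) x : ℂ) - inner ℂ (a j) y = - inner ℂ (a j) (y - x) := by
          rw [inner_sub_right]; ring
        rw [h1, neg_div, neg_smul]
        abel
      have hterm : ∀ j, ‖a j‖ ^ 2 / F * ‖kacStep a b j y - x‖ ^ 2
          = ‖a j‖ ^ 2 / F * ‖y - x‖ ^ 2 - ‖(inner ℂ (a j) (y - x) : ℂ)‖ ^ 2 / F := by
        intro j
        rw [hstep j, errSq' (a j) (ha j) (y - x)]
        have hna : (0:ℝ) < ‖a j‖ := norm_pos_iff.mpr (ha j)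
        field_simp
      rw [Finset.sum_congr rfl fun j _ => hterm j, Finset.sum_sub_distrib,
        ← Finset.sum_div, ← Finset.sum_mul, ← Finset.sum_div]
      have hsum : (∑ j, ‖a j‖ ^ 2) = F := rfl
      rw [hsum]
      have hFe : F / F * ‖y - x‖ ^ 2 = ‖y - x‖ ^ 2 := by
        rw [div_self hFpos.ne']; ring
      rw [hFe]
      have h2 : sigmaMin a ^ 2 * ‖y - x‖ ^ 2 / F ≤ (∑ j, ‖(inner ℂ (a j) (y - x) : ℂ)‖ ^ 2) / F :=
        (div_le_div_iff_of_pos_right hFpos).mpr (hLB (y - x))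
      have hqe : q * ‖y - x‖ ^ 2 = ‖y - x‖ ^ 2 - sigmaMin a ^ 2 * ‖y - x‖ ^ 2 / F := by
        rw [hq, ht]; field_simp
      rw [hqe]
      linarith
    -- main induction
    have key : ∀ K : ℕ, ∀ y : EuclideanSpace ℂ (Fin n),
        ∑ ω : Fin K → Fin m,
            (∏ i, ‖a (ω i)‖ ^ 2 / F) * ‖kacIter a b y (List.ofFn ω) - x‖ ^ 2
          ≤ q ^ K * ‖y - x‖ ^ 2 := by
      intro K
      induction K with
      | zero =>
        intro y
        simp [kacIter]
      | succ K ih =>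
        intro y
        rw [← Equiv.sum_comp (Fin.consEquiv (fun _ : Fin (K+1) => Fin m)), Fintype.sum_prod_type]
        have hωeq : ∀ (j : Fin m) (ω' : Fin K → Fin m),
            (∏ i, ‖a (((Fin.consEquiv (fun _ : Fin (K+1) => Fin m)) (j, ω')) i)‖ ^ 2 / F) *
              ‖kacIter a b y (List.ofFn ((Fin.consEquiv (fun _ : Fin (K+1) => Fin m)) (j, ω'))) - x‖ ^ 2
            = ‖a j‖ ^ 2 / F * ((∏ i, ‖a (ω' i)‖ ^ 2 / F) *
                ‖kacIter a b (kacStep a b j y) (List.ofFn ω') - x‖ ^ 2) := by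
          intro j ω'
          have hω : (Fin.consEquiv (fun _ : Fin (K+1) => Fin m)) (j, ω') = Fin.cons j ω' := by
            ext i
            refine Fin.cases ?_ ?_ i <;> simp [Fin.consEquiv]
          rw [hω]
          have hlist : List.ofFn (Fin.cons j ω' : Fin (K+1) → Fin m) = j :: List.ofFn ω' := by
            rw [List.ofFn_succ]
            simp
          have hprod : (∏ i, ‖a ((Fin.cons j ω' : Fin (K+1) → Fin m) i)‖ ^ 2 / F)
              = ‖a j‖ ^ 2 / F * ∏ i, ‖a (ω' i)‖ ^ 2 / F := by
            rw [Fin.prod_univ_succ]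
            simp
          rw [hlist, hprod]
          have : kacIter a b y (j :: List.ofFn ω') = kacIter a b (kacStep a b j y) (List.ofFn ω') := rfl
          rw [this]
          ring
        calc ∑ j, ∑ ω' : Fin K → Fin m,
              (∏ i, ‖a (((Fin.consEquiv (fun _ : Fin (K+1) => Fin m)) (j, ω')) i)‖ ^ 2 / F) *
                ‖kacIter a b y (List.ofFn ((Fin.consEquiv (fun _ : Fin (K+1) => Fin m)) (j, ω'))) - x‖ ^ 2
            = ∑ j, ‖a j‖ ^ 2 / F * ∑ ω' : Fin K → Fin m, (∏ i, ‖a (ω' i)‖ ^ 2 / F) *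
                ‖kacIter a b (kacStep a b j y) (List.ofFn ω') - x‖ ^ 2 := by
              refine Finset.sum_congr rfl fun j _ => ?_
              rw [Finset.mul_sum]
              exact Finset.sum_congr rfl fun ω' _ => hωeq j ω'
          _ ≤ ∑ j, ‖a j‖ ^ 2 / F * (q ^ K * ‖kacStep a b j y - x‖ ^ 2) := by
              refine Finset.sum_le_sum fun j _ => ?_
              exact mul_le_mul_of_nonneg_left (ih (kacStep a b j y)) (by positivity)
          _ = q ^ K * ∑ j, ‖a j‖ ^ 2 / F * ‖kacStep a b j y - x‖ ^ 2 := by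
              rw [Finset.mul_sum]
              exact Finset.sum_congr rfl fun j _ => by ring
          _ ≤ q ^ K * (q * ‖y - x‖ ^ 2) :=
              mul_le_mul_of_nonneg_left (hone y) (by positivity)
          _ = q ^ (K + 1) * ‖y - x‖ ^ 2 := by ring
    -- final analysis: q^k ≤ ε^2
    have hκ : scaledCond a ^ 2 = F / sigmaMin a ^ 2 := by
      rw [scaledCond, div_pow, Real.sq_sqrt hFpos.le]
    set L : ℝ := Real.log (1 / ε) with hL
    have hL0 : 0 < L := Real.log_pos (one_lt_one_div hε0 hε1)
    have hkt : 2 * L ≤ t * k := by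
      have h1 : t * (2 * (F / sigmaMin a ^ 2) * L) ≤ t * k :=
        mul_le_mul_of_nonneg_left (by rw [hκ] at hk; exact hk) ht0.le
      have h2 : t * (2 * (F / sigmaMin a ^ 2) * L) = 2 * L := by
        rw [ht]; field_simp
      linarith [h1, h2 ▸ h1]
    have hqexp : q ≤ Real.exp (-t) := by
      have := Real.add_one_le_exp (-t)
      rw [hq]; linarith
    have hqk : q ^ k ≤ ε ^ 2 := by
      calc q ^ k ≤ Real.exp (-t) ^ k := pow_le_pow_left₀ hq0 hqexp k
        _ = Real.exp ((k : ℝ) * (-t)) := (Real.exp_nat_mul (-t) k).symm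
        _ ≤ Real.exp (-(2 * L)) := by
            apply Real.exp_le_exp.mpr
            nlinarith
        _ = ε ^ 2 := by
            rw [hL, one_div, Real.log_inv]
            rw [show -(2 * -Real.log ε) = (2:ℕ) * Real.log ε by push_cast; ring]
            rw [Real.exp_nat_mul, Real.exp_log hε0]
    calc ∑ ω : Fin k → Fin m,
          (∏ i, ‖a (ω i)‖ ^ 2 / frobSq a) * ‖kacIter a b x0 (List.ofFn ω) - x‖ ^ 2
        ≤ q ^ k * ‖x0 - x‖ ^ 2 := key k x0
      _ ≤ ε ^ 2 * ‖x0 - x‖ ^ 2 := mul_le_mul_of_nonneg_right hqk (by positivity)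
end
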